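/- For any two infinite sets A and B each equipped with a dense linear order without endpoints, the structures (HF(A), ∈, <_A, A) and (HF(B), ∈, <_B, B) are elementarily equivalent. -/

import Mathlib

open FirstOrder Language

section Order
variable {A B : Type} [LinearOrder A] [LinearOrder B]
  [DenselyOrdered B] [NoMinOrder B] [NoMaxOrder B] [Nonempty B]

theorem extend_one (s : Set A) (hs : s.Finite) (h : A → B)
    (hmono : StrictMonoOn h s) (a : A) :
    ∃ h' : A → B, StrictMonoOn h' (insert a s) ∧ Set.EqOn h' h s := by
  by_cases ha : a ∈ s
  · exact ⟨h, by rwa [Set.insert_eq_self.2 ha], fun x _ => rfl⟩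
  have hmonole : ∀ x ∈ s, ∀ y ∈ s, x ≤ y → h x ≤ h y := by
    intro x hx y hy hxy
    rcases lt_or_eq_of_le hxy with h1 | rfl
    · exact (hmono hx hy h1).le
    · exact le_rfl
  classical
  set P : Finset A := hs.toFinset.filter (· < a) with hP
  set Q : Finset A := hs.toFinset.filter (a < ·) with hQ
  have hPmem : ∀ x ∈ P, x ∈ s ∧ x < a := by
    intro x hx; simpa [hP, Set.Finite.mem_toFinset] using hx
  have hQmem : ∀ x ∈ Q, x ∈ s ∧ a < x := by
    intro x hx; simpa [hQ, Set.Finite.mem_toFinset] using hx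
  have hcover : ∀ x ∈ s, x ∈ P ∨ x ∈ Q := by
    intro x hx
    rcases lt_trichotomy x a with h1 | rfl | h1
    · exact Or.inl (by simp [hP, Set.Finite.mem_toFinset, hx, h1])
    · exact absurd hx ha
    · exact Or.inr (by simp [hQ, Set.Finite.mem_toFinset, hx, h1])
  have key : ∃ b : B, (∀ x ∈ s, x < a → h x < b) ∧ (∀ x ∈ s, a < x → b < h x) := by
    by_cases hPn : P.Nonempty
    · by_cases hQn : Q.Nonempty
      · have h1 := hPmem _ (P.max'_mem hPn)
        have h2 := hQmem _ (Q.min'_mem hQn)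
        obtain ⟨b, hb1, hb2⟩ := exists_between (hmono h1.1 h2.1 (h1.2.trans h2.2))
        refine ⟨b, fun x hx hxa => ?_, fun x hx hax => ?_⟩
        · exact lt_of_le_of_lt (hmonole x hx _ h1.1
            (P.le_max' x (by simp [hP, Set.Finite.mem_toFinset, hx, hxa]))) hb1
        · exact lt_of_lt_of_le hb2 (hmonole _ h2.1 x hx
            (Q.min'_le x (by simp [hQ, Set.Finite.mem_toFinset, hx, hax])))
      · have h1 := hPmem _ (P.max'_mem hPn)
        obtain ⟨b, hb⟩ := exists_gt (h (P.max' hPn))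
        refine ⟨b, fun x hx hxa => ?_, fun x hx hax => ?_⟩
        · exact lt_of_le_of_lt (hmonole x hx _ h1.1
            (P.le_max' x (by simp [hP, Set.Finite.mem_toFinset, hx, hxa]))) hb
        · exact absurd (by simp [hQ, Set.Finite.mem_toFinset, hx, hax] : x ∈ Q)
            (by simpa [Finset.not_nonempty_iff_eq_empty.1 hQn])
    · by_cases hQn : Q.Nonempty
      · have h2 := hQmem _ (Q.min'_mem hQn)
        obtain ⟨b, hb⟩ := exists_lt (h (Q.min' hQn))
        refine ⟨b, fun x hx hxa => ?_, fun x hx hax => ?_⟩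
        · exact absurd (by simp [hP, Set.Finite.mem_toFinset, hx, hxa] : x ∈ P)
            (by simpa [Finset.not_nonempty_iff_eq_empty.1 hPn])
        · exact lt_of_lt_of_le hb (hmonole _ h2.1 x hx
            (Q.min'_le x (by simp [hQ, Set.Finite.mem_toFinset, hx, hax])))
      · refine ⟨Classical.arbitrary B, fun x hx hxa => ?_, fun x hx hax => ?_⟩
        · exact absurd (by simp [hP, Set.Finite.mem_toFinset, hx, hxa] : x ∈ P)
            (by simp [Finset.not_nonempty_iff_eq_empty.1 hPn])
        · exact absurd (by simp [hQ, Set.Finite.mem_toFinset, hx, hax] : x ∈ Q)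
            (by simp [Finset.not_nonempty_iff_eq_empty.1 hQn])
  obtain ⟨b, hb1, hb2⟩ := key
  refine ⟨Function.update h a b, ?_, fun x hx => Function.update_of_ne (fun hxa => ha (by rwa [hxa] at hx)) _ _⟩
  intro x hx y hy hxy
  rcases hx with rfl | hx <;> rcases hy with rfl | hy
  · exact absurd hxy (lt_irrefl _)
  · rw [Function.update_self, Function.update_of_ne (fun hya => ha (by rwa [hya] at hy))]
    exact hb2 y hy hxy
  · rw [Function.update_self, Function.update_of_ne (fun hxa => ha (by rwa [hxa] at hx))]
    exact hb1 x hx hxy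
  · rw [Function.update_of_ne (fun he => ha (by rwa [he] at hx)),
      Function.update_of_ne (fun he => ha (by rwa [he] at hy))]
    exact hmono hx hy hxy

theorem extend_mono (u : Set A) (hu : u.Finite) :
    ∀ (s : Set A), s.Finite → ∀ h : A → B, StrictMonoOn h s →
    ∃ h' : A → B, StrictMonoOn h' (s ∪ u) ∧ Set.EqOn h' h s := by
  refine Set.Finite.induction_on (motive := fun u _ => ∀ (s : Set A), s.Finite → ∀ h : A → B, StrictMonoOn h s →
    ∃ h' : A → B, StrictMonoOn h' (s ∪ u) ∧ Set.EqOn h' h s) u hu ?_ ?_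
  · exact fun s _ h hm => ⟨h, by simpa using hm, fun x _ => rfl⟩
  · intro a u _ hufin ih s hs h hm
    obtain ⟨h1, hm1, he1⟩ := extend_one s hs h hm a
    obtain ⟨h2, hm2, he2⟩ := ih (insert a s) (hs.insert a) h1 hm1
    refine ⟨h2, ?_, fun x hx => (he2 (Set.mem_insert_of_mem _ hx)).trans (he1 hx)⟩
    have : s ∪ insert a u = insert a s ∪ u := by
      ext x; simp [or_comm, or_assoc, or_left_comm]
    rwa [this]

theorem extend_mono' (s t : Set A) (ht : t.Finite) (hst : s ⊆ t) (h : A → B)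
    (hm : StrictMonoOn h s) : ∃ h' : A → B, StrictMonoOn h' t ∧ Set.EqOn h' h s := by
  obtain ⟨h', hm', he'⟩ := extend_mono t ht s (ht.subset hst) h hm
  exact ⟨h', hm'.mono (by simp), he'⟩

end Order

/-- A model of the hereditarily finite sets over a type `A` of atoms: atoms are
memberless and injectively embedded, extensionality holds for non-atoms (sets), every
element has finitely many members, every finite collection of elements is the extension
of some set, and the whole universe satisfies ∈-induction (minimality). -/
structure HFModel (A : Type) where
  H : Type
  mem : H → H → Prop
  atom : A → H
  atom_inj : Function.Injective atom
  mem_atom : ∀ (a : A) (x : H), ¬ mem x (atom a)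
  ext : ∀ x y : H, (∀ a, x ≠ atom a) → (∀ a, y ≠ atom a) →
    (∀ z, mem z x ↔ mem z y) → x = y
  finite_mem : ∀ x : H, {z | mem z x}.Finite
  exists_set : ∀ s : Set H, s.Finite →
    ∃ x : H, (∀ a, x ≠ atom a) ∧ ∀ z, mem z x ↔ z ∈ s
  minimal : ∀ P : Set H, (∀ a, atom a ∈ P) →
    (∀ x, (∀ a, x ≠ atom a) → (∀ z, mem z x → z ∈ P) → x ∈ P) → ∀ x, x ∈ P

namespace HFModel

variable {A B : Type}

theorem wf (M : HFModel A) : WellFounded M.mem := by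
  constructor
  intro x
  refine M.minimal {x | Acc M.mem x} (fun a => ?_) (fun x _ h => ?_) x
  · exact Acc.intro _ (fun y hy => absurd hy (M.mem_atom a y))
  · exact Acc.intro _ h

instance nonemptyH (M : HFModel A) : Nonempty M.H :=
  ⟨(M.exists_set ∅ Set.finite_empty).choose⟩

/-- The transitive closure of an element. -/
def tc (M : HFModel A) (m : M.H) : Set M.H := {z | Relation.ReflTransGen M.mem z m}

theorem tc_self (M : HFModel A) (m : M.H) : m ∈ M.tc m := Relation.ReflTransGen.refl

theorem tc_trans (M : HFModel A) (m : M.H) :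
    ∀ z ∈ M.tc m, ∀ w, M.mem w z → w ∈ M.tc m :=
  fun _ hz _ hw => Relation.ReflTransGen.trans (Relation.ReflTransGen.single hw) hz

theorem tc_finite (M : HFModel A) (m : M.H) : (M.tc m).Finite := by
  refine M.minimal {m | (M.tc m).Finite} (fun a => ?_) (fun x _ ih => ?_) m
  · refine Set.Finite.subset (Set.finite_singleton (M.atom a)) ?_
    intro z hz
    rcases Relation.ReflTransGen.cases_tail hz with h | ⟨c, _, hc⟩
    · simp [h]
    · exact absurd hc (M.mem_atom a c)
  · refine Set.Finite.subset (Set.Finite.union (Set.finite_singleton x)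
      (Set.Finite.biUnion (M.finite_mem x) (fun y hy => ih y hy))) ?_
    intro z hz
    rcases Relation.ReflTransGen.cases_tail hz with h | ⟨c, hzc, hc⟩
    · simp [h]
    · exact Or.inr (Set.mem_biUnion hc hzc)

open Classical in
/-- The recursive image map determined by a map on atoms. -/
noncomputable def buildF (M : HFModel A) (N : HFModel B) (h : A → B) : M.H → N.H :=
  M.wf.fix (fun z F =>
    if hz : ∃ a, z = M.atom a then N.atom (h hz.choose)
    else (N.exists_set (Set.range (fun w : {w : M.H | M.mem w z} => F w.1 w.2))
      (by haveI := (M.finite_mem z).to_subtype; exact Set.finite_range _)).choose)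

theorem buildF_atom (M : HFModel A) (N : HFModel B) (h : A → B) (a : A) :
    buildF M N h (M.atom a) = N.atom (h a) := by
  rw [buildF, WellFounded.fix_eq]
  have hz : ∃ a', M.atom a = M.atom a' := ⟨a, rfl⟩
  rw [dif_pos hz, M.atom_inj hz.choose_spec.symm]

theorem buildF_set (M : HFModel A) (N : HFModel B) (h : A → B) (z : M.H)
    (hz : ∀ a, z ≠ M.atom a) :
    (∀ b, buildF M N h z ≠ N.atom b) ∧
      ∀ v, N.mem v (buildF M N h z) ↔ v ∈ buildF M N h '' {w | M.mem w z} := by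
  have hz' : ¬ ∃ a, z = M.atom a := fun ⟨a, ha⟩ => hz a ha
  have : buildF M N h z = (N.exists_set
      (Set.range (fun w : {w : M.H | M.mem w z} => buildF M N h w.1))
      (by haveI := (M.finite_mem z).to_subtype; exact Set.finite_range _)).choose := by
    rw [buildF, WellFounded.fix_eq, dif_neg hz']
  rw [this]
  obtain ⟨h1, h2⟩ := (N.exists_set
      (Set.range (fun w : {w : M.H | M.mem w z} => buildF M N h w.1))
      (by haveI := (M.finite_mem z).to_subtype; exact Set.finite_range _)).choose_spec
  refine ⟨h1, fun v => (h2 v).trans ?_⟩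
  rw [Set.image_eq_range]

end HFModel

/-- A good partial isomorphism between two HF models. -/
structure Good {A B : Type} [LT A] [LT B] (M : HFModel A) (N : HFModel B) where
  T : Set M.H
  S : Set N.H
  f : M.H → N.H
  g : N.H → M.H
  Tfin : T.Finite
  Ttrans : ∀ x ∈ T, ∀ z, M.mem z x → z ∈ T
  Strans : ∀ w ∈ S, ∀ v, N.mem v w → v ∈ S
  mapsTS : ∀ x ∈ T, f x ∈ S
  mapsST : ∀ w ∈ S, g w ∈ T
  gf : ∀ x ∈ T, g (f x) = x
  fg : ∀ w ∈ S, f (g w) = w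
  atomF : ∀ a : A, M.atom a ∈ T → ∃ b, f (M.atom a) = N.atom b
  atomG : ∀ b : B, N.atom b ∈ S → ∃ a, g (N.atom b) = M.atom a
  ltF : ∀ a a' : A, M.atom a ∈ T → M.atom a' ∈ T → ∀ b b' : B,
    f (M.atom a) = N.atom b → f (M.atom a') = N.atom b' → (a < a' ↔ b < b')
  memF : ∀ x ∈ T, ∀ y ∈ T, (M.mem x y ↔ N.mem (f x) (f y))

namespace Good

variable {A B : Type} [LT A] [LT B] {M : HFModel A} {N : HFModel B} (G : Good M N)

theorem inj : ∀ x ∈ G.T, ∀ y ∈ G.T, G.f x = G.f y → x = y := by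
  intro x hx y hy hfxy
  rw [← G.gf x hx, ← G.gf y hy, hfxy]

theorem S_sub : G.S ⊆ G.f '' G.T := by
  intro w hw
  exact ⟨G.g w, G.mapsST w hw, G.fg w hw⟩

theorem Sfin : G.S.Finite := (G.Tfin.image G.f).subset G.S_sub

theorem atomF' : ∀ x ∈ G.T, ∀ b : B, G.f x = N.atom b → ∃ a, x = M.atom a := by
  intro x hx b hb
  obtain ⟨a, ha⟩ := G.atomG b (hb ▸ G.mapsTS x hx)
  exact ⟨a, by rw [← G.gf x hx, hb, ha]⟩

theorem atomG' : ∀ w ∈ G.S, ∀ a : A, G.g w = M.atom a → ∃ b, w = N.atom b := by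
  intro w hw a ha
  obtain ⟨b, hb⟩ := G.atomF a (ha ▸ G.mapsST w hw)
  exact ⟨b, by rw [← G.fg w hw, ha, hb]⟩

theorem memG : ∀ w ∈ G.S, ∀ v ∈ G.S, (N.mem w v ↔ M.mem (G.g w) (G.g v)) := by
  intro w hw v hv
  rw [G.memF _ (G.mapsST w hw) _ (G.mapsST v hv), G.fg w hw, G.fg v hv]

theorem ltG : ∀ b b' : B, N.atom b ∈ G.S → N.atom b' ∈ G.S → ∀ a a' : A,
    G.g (N.atom b) = M.atom a → G.g (N.atom b') = M.atom a' → (b < b' ↔ a < a') := by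
  intro b b' hb hb' a a' ha ha'
  exact (G.ltF a a' (ha ▸ G.mapsST _ hb) (ha' ▸ G.mapsST _ hb') b b'
    (by rw [← ha, G.fg _ hb]) (by rw [← ha', G.fg _ hb'])).symm

/-- The symmetric good map. -/
def symm : Good N M where
  T := G.S
  S := G.T
  f := G.g
  g := G.f
  Tfin := G.Sfin
  Ttrans := G.Strans
  Strans := G.Ttrans
  mapsTS := G.mapsST
  mapsST := G.mapsTS
  gf := G.fg
  fg := G.gf
  atomF := G.atomG
  atomG := G.atomF
  ltF := G.ltG
  memF := G.memG

@[simp] theorem symm_T : G.symm.T = G.S := rfl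
@[simp] theorem symm_S : G.symm.S = G.T := rfl
@[simp] theorem symm_f : G.symm.f = G.g := rfl
@[simp] theorem symm_g : G.symm.g = G.f := rfl

theorem members_image : ∀ y ∈ G.T, (∀ a, y ≠ M.atom a) →
    {v | N.mem v (G.f y)} = G.f '' {w | M.mem w y} := by
  intro y hy hyna
  ext v
  constructor
  · intro hv
    have hfyS : G.f y ∈ G.S := G.mapsTS y hy
    have hvS : v ∈ G.S := G.Strans _ hfyS v hv
    have : M.mem (G.g v) y := by
      have := (G.memG v hvS _ hfyS).1 hv
      rwa [G.gf y hy] at this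
    exact ⟨G.g v, this, G.fg v hvS⟩
  · rintro ⟨w, hw, rfl⟩
    exact (G.memF w (G.Ttrans y hy w hw) y hy).1 hw

end Good

open HFModel in
theorem Good.extend {A B : Type} [LinearOrder A] [LinearOrder B]
    [DenselyOrdered B] [NoMinOrder B] [NoMaxOrder B] [Nonempty B]
    {M : HFModel A} {N : HFModel B} (G : Good M N) (m : M.H) :
    ∃ G' : Good M N, G.T ⊆ G'.T ∧ G.S ⊆ G'.S ∧ Set.EqOn G'.f G.f G.T ∧
      Set.EqOn G'.g G.g G.S ∧ m ∈ G'.T := by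
  classical
  set T' : Set M.H := G.T ∪ M.tc m with hT'
  have hT'fin : T'.Finite := G.Tfin.union (M.tc_finite m)
  have hT'trans : ∀ x ∈ T', ∀ z, M.mem z x → z ∈ T' := by
    rintro x (hx | hx) z hz
    · exact Or.inl (G.Ttrans x hx z hz)
    · exact Or.inr (M.tc_trans m x hx z hz)
  set oldA : Set A := {a | M.atom a ∈ G.T} with holdA
  set newA : Set A := {a | M.atom a ∈ T'} with hnewA
  have hnewAfin : newA.Finite := Set.Finite.preimage M.atom_inj.injOn hT'fin
  set h₀ : A → B := fun a =>
    if h : ∃ b, G.f (M.atom a) = N.atom b then h.choose else Classical.arbitrary B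
    with hh₀
  have h₀spec : ∀ a ∈ oldA, G.f (M.atom a) = N.atom (h₀ a) := by
    intro a ha
    have h := G.atomF a ha
    simp only [hh₀, dif_pos h]
    exact h.choose_spec
  have h₀mono : StrictMonoOn h₀ oldA := by
    intro a ha a' ha' haa
    exact (G.ltF a a' ha ha' _ _ (h₀spec a ha) (h₀spec a' ha')).1 haa
  obtain ⟨h', h'mono, h'eq⟩ := extend_mono' oldA newA hnewAfin
    (fun a ha => Set.mem_union_left _ ha) h₀ h₀mono
  have h'spec : ∀ a ∈ oldA, G.f (M.atom a) = N.atom (h' a) := fun a ha => by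
    rw [h'eq ha]; exact h₀spec a ha
  set F : M.H → N.H := HFModel.buildF M N h' with hFdef
  have Fatom : ∀ a, F (M.atom a) = N.atom (h' a) := fun a => HFModel.buildF_atom M N h' a
  have Fset : ∀ z, (∀ a, z ≠ M.atom a) → (∀ b, F z ≠ N.atom b) ∧
      ∀ v, (N.mem v (F z) ↔ v ∈ F '' {w | M.mem w z}) :=
    fun z hz => HFModel.buildF_set M N h' z hz
  -- F agrees with G.f on G.T
  have FeqT : ∀ x ∈ G.T, F x = G.f x := by
    have key := M.minimal {x | x ∈ G.T → F x = G.f x} ?_ ?_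
    · exact fun x hx => key x hx
    · intro a
      simp only [Set.mem_setOf_eq]
      intro haT
      rw [Fatom a, ← h'spec a haT]
    · intro x hxna ih
      simp only [Set.mem_setOf_eq] at ih ⊢
      intro hx
      obtain ⟨hFna, hFmem⟩ := Fset x hxna
      have hfx_na : ∀ b, G.f x ≠ N.atom b := by
        intro b hb
        obtain ⟨a, ha⟩ := G.atomF' x hx b hb
        exact hxna a ha
      refine N.ext _ _ hFna hfx_na fun v => ?_
      have him := Set.ext_iff.1 (G.members_image x hx hxna) v
      simp only [Set.mem_setOf_eq] at him
      rw [hFmem v, him]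
      have himg : F '' {w | M.mem w x} = G.f '' {w | M.mem w x} :=
        Set.image_congr fun w hw => ih w hw (G.Ttrans x hx w hw)
      rw [himg]
  -- injectivity of F on T'
  have Finj : ∀ x, x ∈ {x : M.H | ∀ y, x ∈ T' → y ∈ T' → F x = F y → x = y} := by
    refine M.minimal _ ?_ ?_
    · intro a
      simp only [Set.mem_setOf_eq]
      intro y haT hyT hFeq
      by_cases hy : ∃ a', y = M.atom a'
      · obtain ⟨a', rfl⟩ := hy
        rw [Fatom a, Fatom a'] at hFeq
        have heq : h' a = h' a' := N.atom_inj hFeq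
        have := h'mono.injOn haT hyT heq
        rw [this]
      · push_neg at hy
        rw [Fatom a] at hFeq
        exact absurd hFeq.symm ((Fset y hy).1 _)
    · intro x hxna ih
      simp only [Set.mem_setOf_eq] at ih ⊢
      intro y hxT hyT hFeq
      obtain ⟨hxna', hxmem⟩ := Fset x hxna
      by_cases hy : ∃ a', y = M.atom a'
      · obtain ⟨a', rfl⟩ := hy
        exact absurd (hFeq.trans (Fatom a')) (hxna' _)
      · push_neg at hy
        obtain ⟨hyna', hymem⟩ := Fset y hy
        refine M.ext x y hxna hy fun z => ?_
        constructor
        · intro hz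
          have h1 : N.mem (F z) (F x) := (hxmem (F z)).2 ⟨z, hz, rfl⟩
          have h2 : F z ∈ F '' {w | M.mem w y} := (hymem (F z)).1 (hFeq ▸ h1)
          obtain ⟨z', hz', hzz'⟩ := h2
          have := ih z hz z' (hT'trans x hxT z hz) (hT'trans y hyT z' hz') hzz'.symm
          rw [this]; exact hz'
        · intro hz
          have h1 : N.mem (F z) (F y) := (hymem (F z)).2 ⟨z, hz, rfl⟩
          have h2 : F z ∈ F '' {w | M.mem w x} := (hxmem (F z)).1 (hFeq ▸ h1)
          obtain ⟨z', hz', hzz'⟩ := h2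
          have := ih z' hz' z (hT'trans x hxT z' hz') (hT'trans y hyT z hz) hzz'
          rw [← this]; exact hz'
  haveI : Nonempty M.H := M.nonemptyH
  set g' : N.H → M.H := fun w =>
    if h : ∃ x, x ∈ T' ∧ F x = w then h.choose else Classical.arbitrary M.H with hg'
  have g'spec : ∀ x ∈ T', g' (F x) = x := by
    intro x hx
    have h : ∃ x', x' ∈ T' ∧ F x' = F x := ⟨x, hx, rfl⟩
    simp only [hg', dif_pos h]
    exact Finj h.choose x h.choose_spec.1 hx h.choose_spec.2
  refine ⟨⟨T', F '' T', F, g', hT'fin, hT'trans, ?_, fun x hx => ⟨x, hx, rfl⟩, ?_,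
    g'spec, ?_, ?_, ?_, ?_, ?_⟩, Set.subset_union_left, ?_, ?_, ?_,
    Or.inr (M.tc_self m)⟩
  · -- Strans
    rintro w ⟨x, hx, rfl⟩ v hv
    by_cases hxa : ∃ a, x = M.atom a
    · obtain ⟨a, rfl⟩ := hxa
      rw [Fatom a] at hv
      exact absurd hv (N.mem_atom _ _)
    · push_neg at hxa
      obtain ⟨z, hz, rfl⟩ := ((Fset x hxa).2 v).1 hv
      exact ⟨z, hT'trans x hx z hz, rfl⟩
  · -- mapsST
    rintro w ⟨x, hx, rfl⟩
    rw [g'spec x hx]; exact hx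
  · -- fg
    rintro w ⟨x, hx, rfl⟩
    rw [g'spec x hx]
  · -- atomF
    intro a _
    exact ⟨h' a, Fatom a⟩
  · -- atomG
    rintro b ⟨x, hx, hFx⟩
    by_cases hxa : ∃ a, x = M.atom a
    · obtain ⟨a, rfl⟩ := hxa
      refine ⟨a, ?_⟩
      rw [← hFx, g'spec _ hx]
    · exact absurd hFx ((Fset x (by push_neg at hxa; exact hxa)).1 b)
  · -- ltF
    intro a a' ha ha' b b' hb hb'
    have hb1 : b = h' a := (N.atom_inj ((Fatom a).symm.trans hb)).symm
    have hb2 : b' = h' a' := (N.atom_inj ((Fatom a').symm.trans hb')).symm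
    subst hb1; subst hb2
    constructor
    · exact fun hlt => h'mono ha ha' hlt
    · intro hlt
      rcases lt_trichotomy a a' with h1 | rfl | h1
      · exact h1
      · exact absurd hlt (lt_irrefl _)
      · exact absurd (h'mono ha' ha h1) (asymm hlt)
  · -- memF
    intro x hx y hy
    by_cases hya : ∃ a, y = M.atom a
    · obtain ⟨a, rfl⟩ := hya
      rw [Fatom a]
      simp [M.mem_atom, N.mem_atom]
    · push_neg at hya
      obtain ⟨hyna, hymem⟩ := Fset y hya
      constructor
      · intro h
        exact (hymem (F x)).2 ⟨x, h, rfl⟩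
      · intro h
        obtain ⟨z, hz, hzx⟩ := (hymem (F x)).1 h
        have := Finj z x (hT'trans y hy z hz) hx hzx
        rw [← this]; exact hz
  · -- G.S ⊆ F '' T'
    intro w hw
    refine ⟨G.g w, Set.mem_union_left _ (G.mapsST w hw), ?_⟩
    rw [FeqT _ (G.mapsST w hw), G.fg w hw]
  · -- EqOn F G.f G.T
    exact fun x hx => FeqT x hx
  · -- EqOn g' G.g G.S
    intro w hw
    have h1 : G.g w ∈ T' := Set.mem_union_left _ (G.mapsST w hw)
    have h2 : F (G.g w) = w := by rw [FeqT _ (G.mapsST w hw), G.fg w hw]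
    calc g' w = g' (F (G.g w)) := by rw [h2]
    _ = G.g w := g'spec _ h1

open FirstOrder Language

/-- The language of hereditarily finite sets over ordered atoms: a unary predicate for
being an atom and two binary relations (membership and the order on atoms). -/
@[reducible] def hfLang : FirstOrder.Language where
  Functions := fun _ => Empty
  Relations := fun n => match n with
    | 1 => Unit
    | 2 => Fin 2
    | _ => Empty

/-- The `hfLang`-structure on `HF(A)`: the atom predicate, membership, and the order on
atoms. -/
def hfStructure {A : Type} [LT A] (M : HFModel A) : hfLang.Structure M.H where
  funMap := fun {n} f _ => f.elim
  RelMap := fun {n} r v =>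
    match n, r, v with
    | 1, _, v => ∃ a, v 0 = M.atom a
    | 2, i, v =>
        @ite _ (i = (0 : Fin 2)) (instDecidableEqFin 2 i 0) (M.mem (v 0) (v 1))
          (∃ a b : A, v 0 = M.atom a ∧ v 1 = M.atom b ∧ a < b)
    | _ + 3, r, _ => r.elim
    | 0, r, _ => r.elim

theorem hf_term_var {α : Type*} (t : Term hfLang α) : ∃ i : α, t = Term.var i := by
  match t with
  | .var i => exact ⟨i, rfl⟩
  | .func f _ => exact f.elim

theorem good_realize {A B : Type} [LinearOrder A] [LinearOrder B]
    [DenselyOrdered A] [NoMinOrder A] [NoMaxOrder A] [Nonempty A]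
    [DenselyOrdered B] [NoMinOrder B] [NoMaxOrder B] [Nonempty B]
    (M : HFModel A) (N : HFModel B) :
    ∀ {n : ℕ} (φ : BoundedFormula hfLang Empty n) (G : Good M N)
      (v : Empty → M.H) (v' : Empty → N.H) (xs : Fin n → M.H),
      (∀ i, xs i ∈ G.T) →
      (@BoundedFormula.Realize hfLang M.H (hfStructure M) Empty n φ v xs ↔
       @BoundedFormula.Realize hfLang N.H (hfStructure N) Empty n φ v' (G.f ∘ xs)) := by
  letI := hfStructure M
  letI := hfStructure N
  intro n φ
  induction φ with
  | falsum =>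
    intro G v v' xs hxs
    simp [BoundedFormula.Realize]
  | @equal n t₁ t₂ =>
    intro G v v' xs hxs
    obtain ⟨i₁, rfl⟩ := hf_term_var t₁
    obtain ⟨i₂, rfl⟩ := hf_term_var t₂
    obtain i₁ | i₁ := i₁
    · exact i₁.elim
    obtain i₂ | i₂ := i₂
    · exact i₂.elim
    constructor
    · intro h
      have h' : xs i₁ = xs i₂ := h
      show G.f (xs i₁) = G.f (xs i₂)
      rw [h']
    · intro h
      have h' : G.f (xs i₁) = G.f (xs i₂) := h
      show xs i₁ = xs i₂
      exact G.inj _ (hxs i₁) _ (hxs i₂) h'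
  | @rel n l R ts =>
    intro G v v' xs hxs
    have hts : ∀ i, ∃ j : Fin n, ts i = Term.var (Sum.inr j) := by
      intro i
      obtain ⟨k, hk⟩ := hf_term_var (ts i)
      obtain k | k := k
      · exact k.elim
      · exact ⟨k, hk⟩
    choose is his using hts
    match l, R with
    | 0, R => exact R.elim
    | (k+3), R => exact R.elim
    | 1, R =>
      show (∃ a, Term.realize (Sum.elim v xs) (ts 0) = M.atom a) ↔
        (∃ b, Term.realize (Sum.elim v' (G.f ∘ xs)) (ts 0) = N.atom b)
      rw [his 0]
      simp only [Term.realize_var, Sum.elim_inr, Function.comp_apply]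
      constructor
      · rintro ⟨a, ha⟩
        obtain ⟨b, hb⟩ := G.atomF a (ha ▸ hxs (is 0))
        exact ⟨b, by rw [ha, hb]⟩
      · rintro ⟨b, hb⟩
        exact G.atomF' _ (hxs (is 0)) b hb
    | 2, R =>
      change Fin 2 at R
      fin_cases R
      · show (if (0 : Fin 2) = 0 then
            M.mem (Term.realize (Sum.elim v xs) (ts 0)) (Term.realize (Sum.elim v xs) (ts 1))
          else ∃ a b : A, Term.realize (Sum.elim v xs) (ts 0) = M.atom a ∧
            Term.realize (Sum.elim v xs) (ts 1) = M.atom b ∧ a < b) ↔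
          (if (0 : Fin 2) = 0 then
            N.mem (Term.realize (Sum.elim v' (G.f ∘ xs)) (ts 0))
              (Term.realize (Sum.elim v' (G.f ∘ xs)) (ts 1))
          else ∃ a b : B, Term.realize (Sum.elim v' (G.f ∘ xs)) (ts 0) = N.atom a ∧
            Term.realize (Sum.elim v' (G.f ∘ xs)) (ts 1) = N.atom b ∧ a < b)
        rw [if_pos rfl, if_pos rfl, his 0, his 1]
        show M.mem (xs (is 0)) (xs (is 1)) ↔ N.mem (G.f (xs (is 0))) (G.f (xs (is 1)))
        exact G.memF _ (hxs (is 0)) _ (hxs (is 1))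
      · show (if (1 : Fin 2) = 0 then
            M.mem (Term.realize (Sum.elim v xs) (ts 0)) (Term.realize (Sum.elim v xs) (ts 1))
          else ∃ a b : A, Term.realize (Sum.elim v xs) (ts 0) = M.atom a ∧
            Term.realize (Sum.elim v xs) (ts 1) = M.atom b ∧ a < b) ↔
          (if (1 : Fin 2) = 0 then
            N.mem (Term.realize (Sum.elim v' (G.f ∘ xs)) (ts 0))
              (Term.realize (Sum.elim v' (G.f ∘ xs)) (ts 1))
          else ∃ a b : B, Term.realize (Sum.elim v' (G.f ∘ xs)) (ts 0) = N.atom a ∧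
            Term.realize (Sum.elim v' (G.f ∘ xs)) (ts 1) = N.atom b ∧ a < b)
        rw [if_neg (by decide), if_neg (by decide), his 0, his 1]
        show (∃ a b : A, xs (is 0) = M.atom a ∧ xs (is 1) = M.atom b ∧ a < b) ↔
          (∃ a b : B, G.f (xs (is 0)) = N.atom a ∧ G.f (xs (is 1)) = N.atom b ∧ a < b)
        constructor
        · rintro ⟨a, b, ha, hb, hab⟩
          obtain ⟨a', ha'⟩ := G.atomF a (ha ▸ hxs (is 0))
          obtain ⟨b', hb'⟩ := G.atomF b (hb ▸ hxs (is 1))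
          refine ⟨a', b', by rw [ha, ha'], by rw [hb, hb'], ?_⟩
          exact (G.ltF a b (ha ▸ hxs (is 0)) (hb ▸ hxs (is 1)) a' b' (ha ▸ ha') (hb ▸ hb')).1 hab
        · rintro ⟨a', b', ha', hb', hab⟩
          obtain ⟨a, ha⟩ := G.atomF' _ (hxs (is 0)) a' ha'
          obtain ⟨b, hb⟩ := G.atomF' _ (hxs (is 1)) b' hb'
          refine ⟨a, b, ha, hb, ?_⟩
          exact (G.ltF a b (ha ▸ hxs (is 0)) (hb ▸ hxs (is 1)) a' b'
            (by rw [← ha, ha']) (by rw [← hb, hb'])).2 hab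
  | @imp n φ ψ ih1 ih2 =>
    intro G v v' xs hxs
    simp only [BoundedFormula.realize_imp]
    exact imp_congr (ih1 G v v' xs hxs) (ih2 G v v' xs hxs)
  | @all n φ ih =>
    intro G v v' xs hxs
    simp only [BoundedFormula.realize_all]
    constructor
    · intro h w
      obtain ⟨H', hT, hS, hf, hg, hw⟩ := G.symm.extend w
      have hxs' : ∀ i, (Fin.snoc xs (H'.f w) : Fin (n+1) → M.H) i ∈ H'.symm.T := by
        intro i
        refine Fin.lastCases ?_ ?_ i
        · rw [Fin.snoc_last]
          exact H'.mapsTS w hw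
        · intro j
          rw [Fin.snoc_castSucc]
          exact hS (hxs j)
      have key := ih H'.symm v v' ((Fin.snoc xs (H'.f w) : Fin (n+1) → M.H)) hxs'
      have hys : H'.symm.f ∘ (Fin.snoc xs (H'.f w) : Fin (n+1) → M.H) = (Fin.snoc (G.f ∘ xs) w : Fin (n+1) → N.H) := by
        funext i
        refine Fin.lastCases ?_ ?_ i
        · simp only [Function.comp_apply, Fin.snoc_last]
          exact H'.gf w hw
        · intro j
          simp only [Function.comp_apply, Fin.snoc_castSucc]
          exact hg (hxs j)
      rw [hys] at key
      exact key.1 (h _)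
    · intro h m
      obtain ⟨G', hT, hS, hf, hg, hm⟩ := G.extend m
      have hxs' : ∀ i, (Fin.snoc xs m : Fin (n+1) → M.H) i ∈ G'.T := by
        intro i
        refine Fin.lastCases ?_ ?_ i
        · rw [Fin.snoc_last]; exact hm
        · intro j
          rw [Fin.snoc_castSucc]
          exact hT (hxs j)
      have key := ih G' v v' ((Fin.snoc xs m : Fin (n+1) → M.H)) hxs'
      have hys : G'.f ∘ (Fin.snoc xs m : Fin (n+1) → M.H) = (Fin.snoc (G.f ∘ xs) (G'.f m) : Fin (n+1) → N.H) := by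
        funext i
        refine Fin.lastCases ?_ ?_ i
        · simp only [Function.comp_apply, Fin.snoc_last]
        · intro j
          simp only [Function.comp_apply, Fin.snoc_castSucc]
          exact hf (hxs j)
      rw [hys] at key
      exact key.2 (h _)

/-- For any two infinite sets of atoms `A`, `B`, each densely linearly ordered without
endpoints, the structures `(HF(A), ∈, <_A, A)` and `(HF(B), ∈, <_B, B)` are
elementarily equivalent. -/
theorem hf_dense_atoms_elementarilyEquivalent {A B : Type}
    [LinearOrder A] [LinearOrder B] [DenselyOrdered A] [DenselyOrdered B]
    [NoMinOrder A] [NoMaxOrder A] [NoMinOrder B] [NoMaxOrder B]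
    [Infinite A] [Infinite B]
    (M : HFModel A) (N : HFModel B) :
    @FirstOrder.Language.ElementarilyEquivalent hfLang M.H N.H
      (hfStructure M) (hfStructure N) := by
  letI := hfStructure M
  letI := hfStructure N
  haveI : Nonempty M.H := M.nonemptyH
  haveI : Nonempty N.H := N.nonemptyH
  rw [FirstOrder.Language.elementarilyEquivalent_iff]
  intro φ
  have G0 : Good M N :=
    ⟨∅, ∅, fun _ => Classical.arbitrary N.H, fun _ => Classical.arbitrary M.H,
      Set.finite_empty, fun x hx => hx.elim, fun x hx => hx.elim, fun x hx => hx.elim,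
      fun x hx => hx.elim, fun x hx => hx.elim, fun x hx => hx.elim, fun a ha => ha.elim,
      fun b hb => hb.elim, fun a a' ha => ha.elim, fun x hx => hx.elim⟩
  have key := good_realize M N φ G0 (fun e => e.elim) (fun e => e.elim)
    (fun i => i.elim0) (fun i => i.elim0)
  show φ.Realize M.H ↔ φ.Realize N.H
  unfold FirstOrder.Language.Sentence.Realize FirstOrder.Language.Formula.Realize
  have h1 : (default : Empty → M.H) = fun e => e.elim := Subsingleton.elim _ _
  have h2 : (default : Empty → N.H) = fun e => e.elim := Subsingleton.elim _ _
  have h3 : (default : Fin 0 → M.H) = fun i => i.elim0 := Subsingleton.elim _ _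
  have h4 : (default : Fin 0 → N.H) = G0.f ∘ fun i => i.elim0 := Subsingleton.elim _ _
  rw [h1, h2, h3, h4]
  exact key
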